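/- Let d be an odd integer greater than 1 which is not a prime power, and let r be an integer coprime to d. Then the integer φ(d)/ord_d(r) is even, where φ is Euler's totient function and ord_d(r) is the multiplicative order of r modulo d. -/

import Mathlib

theorem even_totient_div_orderOf (d : ℕ) (hd : 1 < d) (hodd : Odd d)
    (hpp : ¬ IsPrimePow d) (r : ℤ) (hr : IsCoprime r (d : ℤ)) :
    Even (d.totient / orderOf ((r : ZMod d))) := by
  have hd0 : d ≠ 0 := by omega
  set p := d.minFac with hpdef
  have hp : p.Prime := Nat.minFac_prime (by omega)
  set a := p ^ d.factorization p with hadef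
  set b := d / a with hbdef
  have hab : a * b = d := Nat.ordProj_mul_ordCompl_eq_self d p
  have hcop : a.Coprime b := Nat.Coprime.pow_left _ (Nat.coprime_ordCompl hp hd0)
  have hk : 0 < d.factorization p := hp.factorization_pos_of_dvd hd0 (Nat.minFac_dvd d)
  have ha1 : 1 < a := Nat.one_lt_pow (by omega) hp.one_lt
  have hb0 : 0 < b := Nat.ordCompl_pos p hd0
  have hb1 : 1 < b := by
    rcases Nat.lt_or_ge b 2 with h | h
    · exfalso
      have : b = 1 := by omega
      have hda : d = a := by rw [← hab, this, mul_one]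
      exact hpp (hda ▸ ⟨p, d.factorization p, hp.prime, hk, rfl⟩)
    · omega
  -- a and b are odd divisors of d
  have hdvd : ∀ x : ℕ, x ∣ d → ¬ (2 ∣ x) := by
    intro x hx h2
    exact (Nat.not_even_iff_odd.mpr hodd) (even_iff_two_dvd.mpr (h2.trans hx))
  have ha2 : 2 < a := by
    have := hdvd a ⟨b, hab.symm⟩
    omega
  have hb2 : 2 < b := by
    have := hdvd b ⟨a, by rw [← hab, mul_comm]⟩
    omega
  haveI : NeZero a := ⟨by omega⟩
  haveI : NeZero b := ⟨by omega⟩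
  haveI : NeZero d := ⟨hd0⟩
  have e : ZMod d ≃+* ZMod a × ZMod b := hab ▸ ZMod.chineseRemainder hcop
  -- order of r mod d is lcm of orders mod a and mod b
  have key : orderOf ((r : ZMod d)) =
      Nat.lcm (orderOf ((r : ZMod a))) (orderOf ((r : ZMod b))) := by
    have hr' : e.toMonoidHom ((r : ZMod d)) = ((r : ZMod a), (r : ZMod b)) := by
      show e ((r : ZMod d)) = _
      rw [map_intCast]
      rfl
    rw [← orderOf_injective e.toMonoidHom e.injective, hr', Prod.orderOf]
  -- r is a unit mod any divisor of d
  have hunit : ∀ n : ℕ, (n : ℤ) ∣ (d : ℤ) → IsUnit ((r : ZMod n)) := by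
    intro n hn
    obtain ⟨u, v, huv⟩ := hr.of_isCoprime_of_dvd_right hn
    refine IsUnit.of_mul_eq_one (a := (r : ZMod n)) (u : ZMod n) ?_
    have : ((u * r + v * n : ℤ) : ZMod n) = ((1 : ℤ) : ZMod n) := by rw [huv]
    push_cast at this
    rw [ZMod.natCast_self] at this
    rw [mul_comm]
    simpa using this
  have hpos : ∀ n : ℕ, 0 < n → (n : ℤ) ∣ (d : ℤ) → 0 < orderOf ((r : ZMod n)) ∧
      orderOf ((r : ZMod n)) ∣ n.totient := by
    intro n hn hnd
    haveI : NeZero n := ⟨by omega⟩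
    obtain ⟨u, hu⟩ := hunit n hnd
    rw [← hu, orderOf_units]
    exact ⟨orderOf_pos u, (ZMod.card_units_eq_totient n) ▸ orderOf_dvd_card⟩
  obtain ⟨hea0, hea⟩ := hpos a (by omega) (by exact_mod_cast Int.natCast_dvd_natCast.mpr ⟨b, hab.symm⟩)
  obtain ⟨heb0, heb⟩ := hpos b (by omega) (by exact_mod_cast Int.natCast_dvd_natCast.mpr ⟨a, by rw [← hab, mul_comm]⟩)
  -- totients are even
  obtain ⟨a', ha'⟩ := (Nat.totient_even ha2).two_dvd
  obtain ⟨b', hb'⟩ := (Nat.totient_even hb2).two_dvd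
  set ea := orderOf ((r : ZMod a))
  set eb := orderOf ((r : ZMod b))
  have hlcm1 : Nat.lcm ea eb ∣ Nat.lcm (2 * a') (2 * b') :=
    Nat.lcm_dvd ((ha' ▸ hea).trans (Nat.dvd_lcm_left _ _))
      ((hb' ▸ heb).trans (Nat.dvd_lcm_right _ _))
  have hlcm2 : Nat.lcm (2 * a') (2 * b') ∣ 2 * (a' * b') :=
    Nat.lcm_dvd (mul_dvd_mul_left 2 (dvd_mul_right a' b'))
      (mul_dvd_mul_left 2 (dvd_mul_left b' a'))
  have h2e : 2 * Nat.lcm ea eb ∣ d.totient := by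
    have : d.totient = a.totient * b.totient := by
      rw [← hab, Nat.totient_mul hcop]
    rw [this, ha', hb', show 2 * a' * (2 * b') = 2 * (2 * (a' * b')) by ring]
    exact mul_dvd_mul_left 2 (hlcm1.trans hlcm2)
  rw [key]
  obtain ⟨m, hm⟩ := h2e
  have hlpos : 0 < Nat.lcm ea eb := Nat.lcm_pos hea0 heb0
  rw [hm, show 2 * Nat.lcm ea eb * m = Nat.lcm ea eb * (2 * m) by ring,
    Nat.mul_div_cancel_left _ hlpos]
  exact ⟨m, two_mul m⟩
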